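/- Let M^n be a θ-slant proper submanifold of a quaternionic space form M̄^{4m}(c) and let 0 < r < n(n−1). Then the normalized scalar curvature ρ = 2τ/(n(n−1)) satisfies ρ ≤ δ_C(r; n−1)/(n(n−1)) + (c/4)(1 + (9/(n−1))·cos²θ), where δ_C(r; n−1) = r𝒞 + ((n−1)(n+r)(n²−n−r)/(rn))·inf{𝒞(L) : L a hyperplane of T_pM}. -/

import Mathlib

open RealInnerProductSpace Finset

/-- Curvature tensor of a quaternionic space form with quaternionic sectional
curvature `c`. -/
noncomputable def qsfCurv {V : Type*} [NormedAddCommGroup V] [InnerProductSpace ℝ V]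
    (c : ℝ) (J : Fin 3 → V →ₗ[ℝ] V) (X Y Z : V) : V :=
  (c / 4) • (⟪Z, Y⟫ • X - ⟪X, Z⟫ • Y
    + ∑ α : Fin 3, (⟪Z, J α Y⟫ • J α X - ⟪Z, J α X⟫ • J α Y
        + (2 * ⟪X, J α Y⟫) • J α Z))

/-- The Casorati curvature `𝒞(L)` of an `(n−1)`-dimensional subspace `L` of the
tangent space, computed in an orthonormal basis of `L`:
`𝒞(L) = (1/(n−1)) ∑_{i,j} ‖h(f_i, f_j)‖²`. -/
noncomputable def hypCas {V : Type*} [NormedAddCommGroup V] [InnerProductSpace ℝ V]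
    [FiniteDimensional ℝ V] (n : ℕ) (B : V →ₗ[ℝ] V →ₗ[ℝ] V) (L : Submodule ℝ V) : ℝ :=
  (1 / ((n : ℝ) - 1)) * ∑ i : Fin (Module.finrank ℝ L), ∑ j : Fin (Module.finrank ℝ L),
    ‖B ((stdOrthonormalBasis ℝ L) i : V) ((stdOrthonormalBasis ℝ L) j : V)‖ ^ 2



section Aux
set_option maxHeartbeats 1000000
open Module

variable {V : Type*} [NormedAddCommGroup V] [InnerProductSpace ℝ V]



lemma expand_aux {n : ℕ} {e : Fin n → V} (he : Orthonormal ℝ e) {x : V}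
    (hx : x ∈ Submodule.span ℝ (Set.range e)) : x = ∑ i, ⟪e i, x⟫ • e i := by
  obtain ⟨c, rfl⟩ := Submodule.mem_span_range_iff_exists_fun ℝ |>.mp hx
  congr 1
  ext i
  rw [he.inner_right_fintype]

lemma span_eq_of_orthonormal [FiniteDimensional ℝ V] {n : ℕ} {W : Submodule ℝ V}
    {e : Fin n → V} (he : Orthonormal ℝ e) (heW : ∀ i, e i ∈ W)
    (hrank : Module.finrank ℝ W = n) : Submodule.span ℝ (Set.range e) = W := by
  apply Submodule.eq_of_le_of_finrank_eq
  · rw [Submodule.span_le]; rintro _ ⟨i, rfl⟩; exact heW i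
  · rw [hrank, finrank_span_eq_card he.linearIndependent, Fintype.card_fin]

lemma expand_mem [FiniteDimensional ℝ V] {n : ℕ} {W : Submodule ℝ V}
    {e : Fin n → V} (he : Orthonormal ℝ e) (heW : ∀ i, e i ∈ W)
    (hrank : Module.finrank ℝ W = n) {x : V} (hx : x ∈ W) :
    x = ∑ i, ⟪e i, x⟫ • e i :=
  expand_aux he (by rw [span_eq_of_orthonormal he heW hrank]; exact hx)

lemma ortho_rows {n : ℕ} {e f : Fin n → V} (he : Orthonormal ℝ e)
    (hef : ∀ i, e i = ∑ j, ⟪f j, e i⟫ • f j) (i k : Fin n) :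
    ∑ j, ⟪e i, f j⟫ * ⟪e k, f j⟫ = if i = k then (1:ℝ) else 0 := by
  have h1 : ⟪e i, e k⟫ = if i = k then (1:ℝ) else 0 := orthonormal_iff_ite.mp he i k
  rw [← h1]
  conv_rhs => rw [hef k]
  rw [inner_sum]
  refine Finset.sum_congr rfl fun j _ => ?_
  rw [real_inner_smul_right, real_inner_comm (f j) (e k)]
  ring

lemma bilin_trace_inv {M : Type*} [AddCommGroup M] [Module ℝ M]
    {n : ℕ} {e f : Fin n → V} (he : Orthonormal ℝ e)
    (hf : ∀ j, f j = ∑ i, ⟪e i, f j⟫ • e i)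
    (hef : ∀ i, e i = ∑ j, ⟪f j, e i⟫ • f j)
    (B : V →ₗ[ℝ] V →ₗ[ℝ] M) :
    ∑ j, B (f j) (f j) = ∑ i, B (e i) (e i) := by
  have key : ∀ j, B (f j) (f j)
      = ∑ i, ∑ k, (⟪e i, f j⟫ * ⟪e k, f j⟫) • B (e k) (e i) := by
    intro j
    conv_lhs => rw [hf j]
    simp [map_sum, LinearMap.sum_apply, map_smul, LinearMap.smul_apply, smul_smul,
      Finset.smul_sum]
  calc ∑ j, B (f j) (f j)
      = ∑ j, ∑ i, ∑ k, (⟪e i, f j⟫ * ⟪e k, f j⟫) • B (e k) (e i) :=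
        Finset.sum_congr rfl fun j _ => key j
    _ = ∑ i, ∑ k, ∑ j, (⟪e i, f j⟫ * ⟪e k, f j⟫) • B (e k) (e i) := by
        rw [Finset.sum_comm]
        refine Finset.sum_congr rfl fun i _ => ?_
        rw [Finset.sum_comm]
    _ = ∑ i, ∑ k, (∑ j, ⟪e i, f j⟫ * ⟪e k, f j⟫) • B (e k) (e i) := by
        simp [Finset.sum_smul]
    _ = ∑ i, B (e i) (e i) := by
        refine Finset.sum_congr rfl fun i _ => ?_
        rw [Finset.sum_congr rfl fun k _ => by rw [ortho_rows he hef i k]]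
        simp

lemma parseval {n : ℕ} {e : Fin n → V} {w : V}
    (hw : w = ∑ i, ⟪e i, w⟫ • e i) : ∑ i, ⟪e i, w⟫ ^ 2 = ‖w‖ ^ 2 := by
  rw [← real_inner_self_eq_norm_sq]
  nth_rewrite 3 [hw]
  rw [inner_sum]
  refine Finset.sum_congr rfl fun i _ => ?_
  rw [real_inner_smul_right, real_inner_comm w (e i), sq]

lemma diag_le_double {n : ℕ} (g : Fin n → Fin n → ℝ) (hg : ∀ i j, 0 ≤ g i j) :
    ∑ i, g i i ≤ ∑ i, ∑ j, g i j :=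
  Finset.sum_le_sum fun i _ => Finset.single_le_sum (fun j _ => hg i j) (Finset.mem_univ i)

lemma sum_split {M : Type*} [AddCommMonoid M] {n k : ℕ} (hnk : n = k + 1)
    (h : Fin n → M) :
    ∑ i, h i = (∑ p : Fin k, h (Fin.castLE (by omega) p)) + h ⟨k, by omega⟩ := by
  subst hnk
  rw [Fin.sum_univ_castSucc]
  rfl


lemma two_sum_lt {n : ℕ} (t : Fin n → Fin n → ℝ) (hsym : ∀ i j, t i j = t j i) :
    2 * (∑ i, ∑ j, if i < j then t i j else 0) = ∑ i, ∑ j, if i = j then 0 else t i j := by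
  have h1 : ∀ i j : Fin n, (if i = j then (0:ℝ) else t i j)
      = (if i < j then t i j else 0) + (if j < i then t i j else 0) := by
    intro i j
    rcases lt_trichotomy i j with h | h | h
    · simp [h, h.ne, not_lt.mpr h.le]
    · simp [h]
    · simp [h, h.ne', not_lt.mpr h.le]
  rw [Finset.sum_congr rfl fun i _ => Finset.sum_congr rfl fun j _ => h1 i j]
  rw [Finset.sum_congr rfl fun i (_ : i ∈ univ) => Finset.sum_add_distrib]
  rw [Finset.sum_add_distrib]
  have h2 : ∑ i : Fin n, ∑ j : Fin n, (if j < i then t i j else 0)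
      = ∑ i : Fin n, ∑ j : Fin n, (if i < j then t i j else 0) := by
    rw [Finset.sum_comm]
    exact Finset.sum_congr rfl fun i _ => Finset.sum_congr rfl fun j _ => by
      rcases lt_or_ge i j with h | h
      · simp [h, hsym i j]
      · simp [not_lt.mpr h]
  rw [h2]; ring


lemma qsf_inner (c : ℝ) (J : Fin 3 → V →ₗ[ℝ] V)
    (hskew : ∀ α (x y : V), ⟪J α x, y⟫ = -⟪x, J α y⟫)
    {x y : V} (hxy : ⟪x, y⟫ = 0) (hyy : ‖y‖ = 1) :
    ⟪qsfCurv c J x y y, x⟫ = (c/4) * (‖x‖^2 + 3 * ∑ α : Fin 3, ⟪x, J α y⟫^2) := by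
  have h0 : ∀ α, ⟪y, J α y⟫ = (0:ℝ) := by
    intro α
    have h := hskew α y y
    have h2 := real_inner_comm y (J α y)
    linarith
  have h1 : ∀ α, ⟪y, J α x⟫ = -⟪x, J α y⟫ := by
    intro α
    rw [← hskew α x y, real_inner_comm]
  have hyx : ⟪y, x⟫ = 0 := by rw [real_inner_comm]; exact hxy
  have hy2 : ⟪y, y⟫ = (1:ℝ) := by
    rw [real_inner_self_eq_norm_sq, hyy]; norm_num
  simp only [qsfCurv, real_inner_smul_left, inner_sub_left, inner_add_left, sum_inner,
    h0, h1, hyx, hxy, hy2, zero_smul, zero_sub, inner_neg_left, neg_smul, one_smul,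
    real_inner_self_eq_norm_sq]
  have h2 : ∀ α, ⟪J α y, x⟫ = ⟪x, J α y⟫ := fun α => real_inner_comm _ _
  simp only [h2, inner_zero_left]
  rw [Finset.sum_congr rfl (fun (α : Fin 3) (_ : α ∈ Finset.univ) =>
    show - -(⟪x, J α y⟫ * ⟪x, J α y⟫) + 2 * ⟪x, J α y⟫ * ⟪x, J α y⟫
      = 3 * ⟪x, J α y⟫ ^ 2 by ring)]
  rw [Finset.mul_sum]
  ring


variable [FiniteDimensional ℝ V]

lemma exists_ext {W L : Submodule ℝ V} (hLW : L ≤ W) {n : ℕ}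
    (hW : finrank ℝ W = n) (hL : finrank ℝ L = n - 1) (hn : 2 ≤ n) :
    ∃ f : Fin n → V, Orthonormal ℝ f ∧ (∀ i, f i ∈ W) ∧
      (∀ i : Fin (finrank ℝ L),
        f (Fin.castLE (by omega) i) = (stdOrthonormalBasis ℝ L i : V)) := by
  classical
  -- unit vector in Lᗮ ⊓ W
  have hdim : finrank ℝ L + finrank ℝ (Lᗮ ⊓ W : Submodule ℝ V) = finrank ℝ W :=
    Submodule.finrank_add_inf_finrank_orthogonal hLW
  have hpos : 0 < finrank ℝ (Lᗮ ⊓ W : Submodule ℝ V) := by omega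
  have : (Lᗮ ⊓ W : Submodule ℝ V) ≠ ⊥ := by
    intro h
    rw [h] at hpos
    simp at hpos
  obtain ⟨u, huW, hu0⟩ := Submodule.exists_mem_ne_zero_of_ne_bot this
  set v : V := ‖u‖⁻¹ • u with hv
  have hvnorm : ‖v‖ = 1 := norm_smul_inv_norm hu0
  have hvmem : v ∈ Lᗮ ⊓ W := Submodule.smul_mem _ _ huW
  set b := stdOrthonormalBasis ℝ L
  refine ⟨fun i => if h : (i : ℕ) < finrank ℝ L then (b ⟨i, h⟩ : V) else v, ?_, ?_, ?_⟩
  · rw [orthonormal_iff_ite]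
    intro i j
    have hbon : ∀ p q : Fin (finrank ℝ L), (⟪(b p : V), (b q : V)⟫ : ℝ)
        = if p = q then 1 else 0 := by
      intro p q
      rw [← Submodule.coe_inner, orthonormal_iff_ite.mp b.orthonormal]
    have hbv : ∀ p : Fin (finrank ℝ L), (⟪(b p : V), v⟫ : ℝ) = 0 := by
      intro p
      exact (Submodule.mem_orthogonal L v).mp hvmem.1 _ (b p).2
    by_cases hi : (i : ℕ) < finrank ℝ L <;> by_cases hj : (j : ℕ) < finrank ℝ L
    · simp only [dif_pos hi, dif_pos hj, hbon]
      by_cases h : i = j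
      · simp [h]
      · have : (⟨(i:ℕ), hi⟩ : Fin (finrank ℝ L)) ≠ ⟨(j:ℕ), hj⟩ := by
          simp [Fin.ext_iff]; intro hij; exact h (Fin.ext hij)
        simp [this, h]
    · have hij : i ≠ j := by rintro rfl; exact hj hi
      simp [dif_pos hi, dif_neg hj, hbv, hij]
    · have hij : i ≠ j := by rintro rfl; exact hi hj
      have hvb : (⟪v, (b ⟨(j:ℕ), hj⟩ : V)⟫ : ℝ) = 0 := by
        rw [real_inner_comm]; exact hbv _
      simp [dif_neg hi, dif_pos hj, hvb, hij]
    · have hij : i = j := by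
        have h1 : (i : ℕ) = n - 1 := by omega
        have h2 : (j : ℕ) = n - 1 := by omega
        exact Fin.ext (h1.trans h2.symm)
      simp [dif_neg hi, dif_neg hj, hij, real_inner_self_eq_norm_sq, hvnorm]
  · intro i
    by_cases hi : (i : ℕ) < finrank ℝ L
    · simpa [dif_pos hi] using hLW (b ⟨i, hi⟩).2
    · simpa [dif_neg hi] using hvmem.2
  · intro i
    have hi : ((Fin.castLE (by omega : finrank ℝ L ≤ n) i : Fin n) : ℕ) < finrank ℝ L := i.2
    simp only [dif_pos hi]
    exact congrArg _ (congrArg b (Fin.ext rfl))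


lemma key_ineq {W : Submodule ℝ V} {n : ℕ} (hn : 2 ≤ n)
    (hrank : finrank ℝ W = n)
    {e : Fin n → V} (he : Orthonormal ℝ e) (heW : ∀ i, e i ∈ W)
    (B : V →ₗ[ℝ] V →ₗ[ℝ] V) {r : ℝ} (hr0 : 0 < r)
    (hr1 : r < (n : ℝ) * ((n : ℝ) - 1))
    {L : Submodule ℝ V} (hLW : L ≤ W) (hL : finrank ℝ L = n - 1) :
    ‖∑ i, B (e i) (e i)‖^2 ≤ (1 + r/(n:ℝ)) * (∑ i, ∑ j, ‖B (e i) (e j)‖^2)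
      + (((n:ℝ)-1)*((n:ℝ)+r)*((n:ℝ)^2-(n:ℝ)-r)/(r*(n:ℝ))) * hypCas n B L := by
  obtain ⟨f, hf, hfW, hfb⟩ := exists_ext hLW hrank hL hn
  -- mutual expansions
  have hexp_f : ∀ j, f j = ∑ i, ⟪e i, f j⟫ • e i :=
    fun j => expand_mem he heW hrank (hfW j)
  have hexp_e : ∀ i, e i = ∑ j, ⟪f j, e i⟫ • f j :=
    fun i => expand_mem hf hfW hrank (heW i)
  -- trace invariance
  have htr : ∑ j, B (f j) (f j) = ∑ i, B (e i) (e i) :=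
    bilin_trace_inv he hexp_f hexp_e B
  -- Hilbert-Schmidt invariance
  have hstep1 : ∀ u : V, ∑ j, (⟪B (f j) u, B (f j) u⟫ : ℝ)
      = ∑ i, ⟪B (e i) u, B (e i) u⟫ := by
    intro u
    exact bilin_trace_inv he hexp_f hexp_e
      (LinearMap.mk₂ ℝ (fun x y => (⟪B x u, B y u⟫ : ℝ))
        (by intros; simp [map_add, LinearMap.add_apply, inner_add_left])
        (by intros; simp [map_smul, LinearMap.smul_apply, real_inner_smul_left])
        (by intros; simp [map_add, LinearMap.add_apply, inner_add_right])
        (by intros; simp [map_smul, LinearMap.smul_apply, real_inner_smul_right]))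
  have hstep2 : ∀ u : V, ∑ j, (⟪B u (f j), B u (f j)⟫ : ℝ)
      = ∑ i, ⟪B u (e i), B u (e i)⟫ := by
    intro u
    exact bilin_trace_inv he hexp_f hexp_e
      (LinearMap.mk₂ ℝ (fun x y => (⟪B u x, B u y⟫ : ℝ))
        (by intros; simp [map_add, inner_add_left])
        (by intros; simp [map_smul, real_inner_smul_left])
        (by intros; simp [map_add, inner_add_right])
        (by intros; simp [map_smul, real_inner_smul_right]))
  have hHS : ∑ j, ∑ l, ‖B (f j) (f l)‖^2 = ∑ i, ∑ k, ‖B (e i) (e k)‖^2 := by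
    have h1 : ∀ j l, (‖B (f j) (f l)‖:ℝ)^2 = ⟪B (f j) (f l), B (f j) (f l)⟫ :=
      fun j l => (real_inner_self_eq_norm_sq _).symm
    calc ∑ j, ∑ l, ‖B (f j) (f l)‖^2
        = ∑ j, ∑ l, (⟪B (f j) (f l), B (f j) (f l)⟫:ℝ) := by
          exact Finset.sum_congr rfl fun j _ => Finset.sum_congr rfl fun l _ => h1 j l
      _ = ∑ j, ∑ i, (⟪B (f j) (e i), B (f j) (e i)⟫:ℝ) :=
          Finset.sum_congr rfl fun j _ => hstep2 (f j)
      _ = ∑ i, ∑ j, (⟪B (f j) (e i), B (f j) (e i)⟫:ℝ) := Finset.sum_comm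
      _ = ∑ i, ∑ k, (⟪B (e k) (e i), B (e k) (e i)⟫:ℝ) :=
          Finset.sum_congr rfl fun i _ => hstep1 (e i)
      _ = ∑ k, ∑ i, (⟪B (e k) (e i), B (e k) (e i)⟫:ℝ) := Finset.sum_comm
      _ = ∑ i, ∑ k, ‖B (e i) (e k)‖^2 := by
          exact Finset.sum_congr rfl fun i _ => Finset.sum_congr rfl fun k _ =>
            real_inner_self_eq_norm_sq _
  have hle : finrank ℝ L ≤ n := by omega
  have hnk : n = finrank ℝ L + 1 := by omega
  set x : V := ∑ p : Fin (finrank ℝ L), B (f (Fin.castLE hle p)) (f (Fin.castLE hle p))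
    with hxdef
  set y : V := B (f ⟨finrank ℝ L, by omega⟩) (f ⟨finrank ℝ L, by omega⟩) with hydef
  have hTsplit : ∑ j, B (f j) (f j) = x + y := sum_split hnk _
  set S1 : ℝ := ∑ p : Fin (finrank ℝ L), ‖B (f (Fin.castLE hle p)) (f (Fin.castLE hle p))‖^2
    with hS1def
  set SL : ℝ := ∑ p : Fin (finrank ℝ L), ∑ q : Fin (finrank ℝ L),
    ‖B (f (Fin.castLE hle p)) (f (Fin.castLE hle q))‖^2 with hSLdef
  have hhyp : hypCas n B L = (1/((n:ℝ)-1)) * SL := by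
    unfold hypCas
    rw [hSLdef]
    congr 1
    refine Finset.sum_congr rfl fun p _ => Finset.sum_congr rfl fun q _ => ?_
    rw [hfb p, hfb q]
  have hS1SL : S1 ≤ SL :=
    diag_le_double (fun p q => ‖B (f (Fin.castLE hle p)) (f (Fin.castLE hle q))‖^2)
      (fun p q => by positivity)
  have hdsplit : ∑ i, ‖B (f i) (f i)‖^2 = S1 + ‖y‖^2 :=
    sum_split hnk (fun i => ‖B (f i) (f i)‖^2)
  have hC1 : S1 + ‖y‖^2 ≤ ∑ j, ∑ l, ‖B (f j) (f l)‖^2 := by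
    rw [← hdsplit]
    exact diag_le_double (fun j l => ‖B (f j) (f l)‖^2) (fun j l => by positivity)
  have hN0 : (0:ℝ) < (n:ℝ) := by
    have : 0 < n := by omega
    exact_mod_cast this
  have hN1 : (2:ℝ) ≤ (n:ℝ) := by exact_mod_cast hn
  have hcard : ((Fintype.card (Fin (finrank ℝ L)) : ℕ) : ℝ) = (n:ℝ) - 1 := by
    rw [Fintype.card_fin]
    have h1 : (1:ℕ) ≤ n := by omega
    rw [hL]
    push_cast [Nat.cast_sub h1]
    ring
  have hxbound : ‖x‖^2 ≤ ((n:ℝ)-1) * S1 := by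
    calc ‖x‖^2 ≤ (∑ p : Fin (finrank ℝ L), ‖B (f (Fin.castLE hle p)) (f (Fin.castLE hle p))‖)^2 := by
          apply pow_le_pow_left₀ (norm_nonneg _) (norm_sum_le _ _)
      _ ≤ (Fintype.card (Fin (finrank ℝ L)) : ℝ) * S1 := by
          have := sq_sum_le_card_mul_sum_sq
            (s := (Finset.univ : Finset (Fin (finrank ℝ L))))
            (f := fun p => ‖B (f (Fin.castLE hle p)) (f (Fin.castLE hle p))‖)
          simpa [hS1def] using this
      _ = ((n:ℝ)-1) * S1 := by rw [hcard]
  have hcs : ⟪x, y⟫ ≤ ‖x‖ * ‖y‖ := real_inner_le_norm x y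
  have hxy2 : 2*‖x‖*‖y‖ ≤ ((n:ℝ)/r)*‖x‖^2 + (r/(n:ℝ))*‖y‖^2 := by
    rw [div_mul_eq_mul_div, div_mul_eq_mul_div,
      div_add_div _ _ (ne_of_gt hr0) (ne_of_gt hN0), le_div_iff₀ (by positivity)]
    nlinarith [sq_nonneg ((n:ℝ)*‖x‖ - r*‖y‖), hr0.le, hN0.le, norm_nonneg x, norm_nonneg y]
  have hT2 : ‖x + y‖^2 ≤ (1+(n:ℝ)/r)*‖x‖^2 + (1+r/(n:ℝ))*‖y‖^2 := by
    rw [norm_add_sq_real]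
    nlinarith [hcs, hxy2]
  -- coefficients
  set N : ℝ := (n:ℝ)
  have hQ1 : 0 < N^2 - N - r := by nlinarith
  have hQ0 : 0 ≤ (N+r)*(N^2-N-r)/(r*N) := by positivity
  have hA0 : (0:ℝ) ≤ 1 + r/N := by positivity
  have hNe : N - 1 ≠ 0 := by nlinarith
  have hKQ : (((N-1)*(N+r)*(N^2-N-r))/(r*N)) * ((1/(N-1))*SL)
      = ((N+r)*(N^2-N-r)/(r*N)) * SL := by
    field_simp
  have hiden : (1+N/r)*(N-1) = (1+r/N) + (N+r)*(N^2-N-r)/(r*N) := by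
    field_simp
    ring
  rw [← htr, hTsplit, ← hHS, hhyp, hKQ]
  have m1 : (1+r/N)*(S1+‖y‖^2) ≤ (1+r/N)*(∑ j, ∑ l, ‖B (f j) (f l)‖^2) :=
    mul_le_mul_of_nonneg_left hC1 hA0
  have m2 : ((N+r)*(N^2-N-r)/(r*N))*S1 ≤ ((N+r)*(N^2-N-r)/(r*N))*SL :=
    mul_le_mul_of_nonneg_left hS1SL hQ0
  have m3 : ‖x+y‖^2 ≤ (1+N/r)*(((N-1))*S1) + (1+r/N)*‖y‖^2 := by
    refine le_trans hT2 ?_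
    have h1 : (0:ℝ) ≤ 1 + N/r := by positivity
    exact add_le_add_left (mul_le_mul_of_nonneg_left hxbound h1) _
  have m4 : (1+N/r)*((N-1)*S1) = (1+r/N)*S1 + ((N+r)*(N^2-N-r)/(r*N))*S1 := by
    rw [← mul_assoc, hiden]
    ring
  linarith


end Aux

set_option maxHeartbeats 1000000 in
/-- for a θ-slant proper submanifold `Mⁿ` of a quaternionic space
form `M̄^{4m}(c)` and any `0 < r < n(n−1)`, the normalized scalar curvature
satisfies `ρ ≤ δ_C(r;n−1)/(n(n−1)) + (c/4)(1 + (9/(n−1))cos²θ)`, where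
`δ_C(r;n−1) = r𝒞 + ((n−1)(n+r)(n²−n−r)/(rn))·inf{𝒞(L) : L hyperplane of T_pM}`.
Pointwise model: `W` is the tangent space, `e` an orthonormal basis of `W`, `B`
the (symmetric, normal-valued) second fundamental form, and `τ` is given by the
Gauss equation with the quaternionic space form curvature `qsfCurv`. -/
theorem stmt7 {V : Type*} [NormedAddCommGroup V] [InnerProductSpace ℝ V]
    [FiniteDimensional ℝ V] (m : ℕ) (hdim : Module.finrank ℝ V = 4 * m) (c : ℝ)
    (J : Fin 3 → V →ₗ[ℝ] V)
    (hJiso : ∀ α (x y : V), ⟪J α x, J α y⟫ = ⟪x, y⟫)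
    (hJsq : ∀ α (x : V), J α (J α x) = -x)
    (hJmul : ∀ (α : Fin 3) (x : V), J α (J (α + 1) x) = J (α + 2) x)
    (hJanti : ∀ (α : Fin 3) (x : V), J (α + 1) (J α x) = -(J (α + 2) x))
    (W : Submodule ℝ V) (θ : ℝ) (hθ1 : 0 < θ) (hθ2 : θ < Real.pi / 2)
    (hslant : ∀ (α : Fin 3), ∀ x ∈ W,
      ‖((W.orthogonalProjection (J α x)) : V)‖ = Real.cos θ * ‖x‖)
    (n : ℕ) (hn : 2 ≤ n) (hrank : Module.finrank ℝ W = n)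
    (e : Fin n → V) (he : Orthonormal ℝ e) (heW : ∀ i, e i ∈ W)
    (B : V →ₗ[ℝ] V →ₗ[ℝ] V)
    (hBsymm : ∀ x y : V, B x y = B y x)
    (hBnormal : ∀ x ∈ W, ∀ y ∈ W, B x y ∈ Wᗮ)
    (r : ℝ) (hr0 : 0 < r) (hr1 : r < (n : ℝ) * ((n : ℝ) - 1)) :
    2 * (∑ i : Fin n, ∑ j : Fin n,
          if i < j then
            ⟪qsfCurv c J (e i) (e j) (e j), e i⟫ + ⟪B (e i) (e i), B (e j) (e j)⟫
              - ‖B (e i) (e j)‖ ^ 2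
          else 0) / ((n : ℝ) * ((n : ℝ) - 1))
      ≤ (r * ((n : ℝ)⁻¹ * ∑ i : Fin n, ∑ j : Fin n, ‖B (e i) (e j)‖ ^ 2)
          + (((n : ℝ) - 1) * ((n : ℝ) + r) * ((n : ℝ) ^ 2 - (n : ℝ) - r) / (r * (n : ℝ)))
            * sInf {x : ℝ | ∃ L : Submodule ℝ V,
                L ≤ W ∧ Module.finrank ℝ L = n - 1 ∧ x = hypCas n B L})
          / ((n : ℝ) * ((n : ℝ) - 1))
        + (c / 4) * (1 + (9 / ((n : ℝ) - 1)) * Real.cos θ ^ 2) := by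
  classical
  have hskew : ∀ (α : Fin 3) (x y : V), ⟪J α x, y⟫ = -⟪x, J α y⟫ := by
    intro α x y
    have h := hJiso α x (J α y)
    rw [hJsq α y, inner_neg_right] at h
    linarith
  have hN0 : (0:ℝ) < (n:ℝ) := by
    have : 0 < n := by omega
    exact_mod_cast this
  have hN2 : (2:ℝ) ≤ (n:ℝ) := by exact_mod_cast hn
  have hNN : (0:ℝ) < (n:ℝ) * ((n:ℝ) - 1) := by nlinarith
  set T : V := ∑ i, B (e i) (e i) with hT
  set Csum : ℝ := ∑ i, ∑ j, ‖B (e i) (e j)‖^2 with hCsumdef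
  -- the slant computation
  have hcos : ∀ (α : Fin 3) (j : Fin n), ∑ i, ⟪e i, J α (e j)⟫^2 = Real.cos θ ^ 2 := by
    intro α j
    set w : V := ((W.orthogonalProjection (J α (e j))) : V) with hw
    have hwW : w ∈ W := SetLike.coe_mem _
    have h1 : ∀ i, ⟪e i, J α (e j)⟫ = ⟪e i, w⟫ := by
      intro i
      have h2 : J α (e j) - w ∈ Wᗮ := W.sub_starProjection_mem_orthogonal _
      have h3 : ⟪e i, J α (e j) - w⟫ = (0:ℝ) :=
        (Submodule.mem_orthogonal W _).mp h2 (e i) (heW i)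
      rw [inner_sub_right] at h3
      linarith
    rw [Finset.sum_congr rfl (fun i _ => by rw [h1 i])]
    rw [parseval (expand_mem he heW hrank hwW), hw, hslant α (e j) (heW j), he.1 j]
    ring
  -- values of the curvature term
  have hval : ∀ i j, i ≠ j → ⟪qsfCurv c J (e i) (e j) (e j), e i⟫
      = (c/4)*(1 + 3*∑ α : Fin 3, ⟪e i, J α (e j)⟫^2) := by
    intro i j hij
    rw [qsf_inner c J hskew (he.2 hij) (he.1 j), he.1 i, one_pow]
  have hsqswap : ∀ (α : Fin 3) i j, ⟪e j, J α (e i)⟫^2 = ⟪e i, J α (e j)⟫^2 := by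
    intro α i j
    have h1 : ⟪e j, J α (e i)⟫ = -⟪e i, J α (e j)⟫ :=
      (real_inner_comm _ _).trans (hskew α (e i) (e j))
    rw [h1]
    ring
  -- symmetrize the double sum
  have hsym : ∀ i j, (⟪qsfCurv c J (e i) (e j) (e j), e i⟫
        + ⟪B (e i) (e i), B (e j) (e j)⟫ - ‖B (e i) (e j)‖^2)
      = (⟪qsfCurv c J (e j) (e i) (e i), e j⟫
        + ⟪B (e j) (e j), B (e i) (e i)⟫ - ‖B (e j) (e i)‖^2) := by
    intro i j
    by_cases h : i = j
    · subst h; rfl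
    · rw [hval i j h, hval j i (Ne.symm h), hBsymm (e j) (e i),
        real_inner_comm (B (e j) (e j)),
        Finset.sum_congr rfl (fun α _ => hsqswap α i j)]
  have h2G := two_sum_lt (fun i j => ⟪qsfCurv c J (e i) (e j) (e j), e i⟫
      + ⟪B (e i) (e i), B (e j) (e j)⟫ - ‖B (e i) (e j)‖^2) hsym
  -- split off-diagonal sum into curvature part and B part
  have hq0 : ∀ (α : Fin 3) (x : V), ⟪x, J α x⟫ = (0:ℝ) := by
    intro α x
    have h := hskew α x x
    have h2 := real_inner_comm (J α x) x
    linarith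
  have hsplit_t : ∀ i j : Fin n, (if i = j then (0:ℝ) else
        (⟪qsfCurv c J (e i) (e j) (e j), e i⟫
          + ⟪B (e i) (e i), B (e j) (e j)⟫ - ‖B (e i) (e j)‖^2))
      = (if i = j then 0 else ((c/4)*(1 + 3*∑ α : Fin 3, ⟪e i, J α (e j)⟫^2)))
        + (⟪B (e i) (e i), B (e j) (e j)⟫ - ‖B (e i) (e j)‖^2) := by
    intro i j
    by_cases h : i = j
    · subst h
      simp [real_inner_self_eq_norm_sq]
    · rw [if_neg h, if_neg h, hval i j h]
      ring
  rw [Finset.sum_congr rfl (fun i (_ : i ∈ Finset.univ) =>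
    Finset.sum_congr rfl (fun j (_ : j ∈ Finset.univ) => hsplit_t i j))] at h2G
  rw [Finset.sum_congr rfl (fun i (_ : i ∈ Finset.univ) =>
    Finset.sum_add_distrib), Finset.sum_add_distrib] at h2G
  -- curvature double sum
  have hq_ite : ∀ i : Fin n, ∑ j, (if i = j then (0:ℝ) else
      ((c/4)*(1 + 3*∑ α : Fin 3, ⟪e i, J α (e j)⟫^2)))
      = (∑ j, (c/4)*(1 + 3*∑ α : Fin 3, ⟪e i, J α (e j)⟫^2)) - c/4 := by
    intro i
    have h1 : ∀ j : Fin n, (if i = j then (0:ℝ) else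
        ((c/4)*(1 + 3*∑ α : Fin 3, ⟪e i, J α (e j)⟫^2)))
        = ((c/4)*(1 + 3*∑ α : Fin 3, ⟪e i, J α (e j)⟫^2))
          - (if i = j then ((c/4)*(1 + 3*∑ α : Fin 3, ⟪e i, J α (e j)⟫^2)) else 0) := by
      intro j
      by_cases h : i = j <;> simp [h]
    rw [Finset.sum_congr rfl (fun j _ => h1 j), Finset.sum_sub_distrib,
      Finset.sum_ite_eq]
    simp [hq0]
  have hqsum : ∀ i : Fin n, ∑ j, (c/4)*(1 + 3*∑ α : Fin 3, ⟪e j, J α (e i)⟫^2)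
      = (c/4)*((n:ℝ) + 9 * Real.cos θ ^ 2) := by
    intro i
    rw [← Finset.mul_sum]
    congr 1
    rw [Finset.sum_add_distrib, ← Finset.mul_sum, Finset.sum_comm]
    rw [Finset.sum_congr rfl (fun α (_ : α ∈ Finset.univ) => hcos α i)]
    simp
    ring
  have hqtotal : ∑ i : Fin n, ∑ j, (if i = j then (0:ℝ) else
      ((c/4)*(1 + 3*∑ α : Fin 3, ⟪e i, J α (e j)⟫^2)))
      = (c/4)*((n:ℝ)*(n:ℝ) - (n:ℝ) + 9*(n:ℝ)*Real.cos θ ^ 2) := by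
    rw [Finset.sum_congr rfl (fun i (_ : i ∈ Finset.univ) => hq_ite i),
      Finset.sum_sub_distrib, Finset.sum_comm]
    rw [Finset.sum_congr rfl (fun j (_ : j ∈ Finset.univ) => hqsum j)]
    simp only [Finset.sum_const, Finset.card_univ, Fintype.card_fin, nsmul_eq_mul,
      smul_eq_mul]
    ring
  -- B part double sum
  have hptotal : ∑ i : Fin n, ∑ j, (⟪B (e i) (e i), B (e j) (e j)⟫ - ‖B (e i) (e j)‖^2)
      = ‖T‖^2 - Csum := by
    rw [Finset.sum_congr rfl (fun i (_ : i ∈ Finset.univ) => Finset.sum_sub_distrib _ _),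
      Finset.sum_sub_distrib]
    congr 1
    rw [← real_inner_self_eq_norm_sq, hT, sum_inner]
    exact Finset.sum_congr rfl fun i _ => by rw [inner_sum]
  rw [hqtotal, hptotal] at h2G
  -- the sInf part
  set K : ℝ := ((n:ℝ)-1)*((n:ℝ)+r)*((n:ℝ)^2-(n:ℝ)-r)/(r*(n:ℝ)) with hKdef
  have hKpos : 0 < K := by
    apply div_pos
    · have h1 : (0:ℝ) < (n:ℝ) - 1 := by nlinarith
      have h2 : (0:ℝ) < (n:ℝ) + r := by nlinarith
      have h3 : (0:ℝ) < (n:ℝ)^2 - (n:ℝ) - r := by nlinarith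
      positivity
    · positivity
  set S : Set ℝ := {x : ℝ | ∃ L : Submodule ℝ V,
      L ≤ W ∧ Module.finrank ℝ L = n - 1 ∧ x = hypCas n B L} with hSdef
  have hne : S.Nonempty := by
    have hle : n - 1 ≤ n := by omega
    set L₀ : Submodule ℝ V :=
      Submodule.span ℝ (Set.range (e ∘ Fin.castLE hle)) with hL₀def
    have honb : Orthonormal ℝ (e ∘ Fin.castLE hle) :=
      he.comp _ (Fin.castLE_injective hle)
    have hfr : Module.finrank ℝ L₀ = n - 1 := by
      rw [hL₀def, finrank_span_eq_card honb.linearIndependent, Fintype.card_fin]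
    have hL₀W : L₀ ≤ W := by
      rw [hL₀def, Submodule.span_le]
      rintro _ ⟨p, rfl⟩
      exact heW _
    exact ⟨hypCas n B L₀, L₀, hL₀W, hfr, rfl⟩
  have hlowK : ∀ x ∈ S, (‖T‖^2 - (1 + r/(n:ℝ))*Csum)/K ≤ x := by
    rintro x ⟨L, hLW, hfrL, rfl⟩
    rw [div_le_iff₀ hKpos]
    have hkey := key_ineq hn hrank he heW B hr0 hr1 hLW hfrL
    rw [← hT, ← hCsumdef] at hkey
    linarith
  have hsInf : (‖T‖^2 - (1 + r/(n:ℝ))*Csum)/K ≤ sInf S := le_csInf hne hlowK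
  have hKs : ‖T‖^2 - (1 + r/(n:ℝ))*Csum ≤ K * sInf S := by
    rw [div_le_iff₀ hKpos] at hsInf
    linarith
  -- final assembly
  rw [h2G, add_div]
  have hEq : (c/4)*((n:ℝ)*(n:ℝ) - (n:ℝ) + 9*(n:ℝ)*Real.cos θ ^ 2) / ((n:ℝ)*((n:ℝ)-1))
      = (c/4) * (1 + (9 / ((n : ℝ) - 1)) * Real.cos θ ^ 2) := by
    have h1 : (n:ℝ) ≠ 0 := ne_of_gt hN0
    have h2 : (n:ℝ) - 1 ≠ 0 := by nlinarith
    field_simp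
  rw [hEq]
  have hnum : ‖T‖^2 - Csum ≤ r * ((n:ℝ)⁻¹ * Csum) + K * sInf S := by
    have hring : (1 + r/(n:ℝ))*Csum = Csum + r*((n:ℝ)⁻¹ * Csum) := by
      field_simp
    linarith
  have hmain : (‖T‖^2 - Csum) / ((n:ℝ)*((n:ℝ)-1))
      ≤ (r * ((n:ℝ)⁻¹ * Csum) + K * sInf S) / ((n:ℝ)*((n:ℝ)-1)) :=
    (div_le_div_iff_of_pos_right hNN).mpr hnum
  linarith
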